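/- If a natural number occurs twice as a value of the sequence a, then the two occurrences are at consecutive indices: for all natural numbers x < y, if a(x) = a(y) then y = x + 1. -/
import Mathlib

/-- The sequence A105774: `a n = n` for `n ≤ 1`, and
`a n = fib (j+1) - a (n - fib j)` where `j ≥ 2` is the unique index
with `fib j < n ≤ fib (j+1)` (realized as the greatest `j ≤ n` with `fib j < n`). -/
def a (n : ℕ) : ℕ :=
  if _h : n ≤ 1 then n
  else
    Nat.fib (Nat.findGreatest (fun j => Nat.fib j < n) n + 1) -
      a (n - Nat.fib (Nat.findGreatest (fun j => Nat.fib j < n) n))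
decreasing_by
  have h2 : 2 ≤ n := by omega
  have hj : 2 ≤ Nat.findGreatest (fun j => Nat.fib j < n) n :=
    Nat.le_findGreatest h2 (by show Nat.fib 2 < n; simp [Nat.fib_two]; omega)
  have hpos : 0 < Nat.fib (Nat.findGreatest (fun j => Nat.fib j < n) n) :=
    Nat.fib_pos.mpr (by omega)
  omega

lemma a_zero : a 0 = 0 := by simp [a]
lemma a_one : a 1 = 1 := by simp [a]

lemma fib_lt_of_lt {i j : ℕ} (h2 : 2 ≤ i) (h : i < j) : Nat.fib i < Nat.fib j :=
  lt_of_lt_of_le (Nat.fib_lt_fib_succ h2) (Nat.fib_mono h)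

/-- the recursion, with explicit interval index -/
lemma a_rec {j n : ℕ} (hj : 2 ≤ j) (h1 : Nat.fib j < n) (h2 : n ≤ Nat.fib (j+1)) :
    a n = Nat.fib (j+1) - a (n - Nat.fib j) := by
  have hn2 : 2 ≤ n := by
    have : 1 ≤ Nat.fib j := Nat.fib_pos.mpr (by omega); omega
  have hjn : j ≤ n := by
    have := Nat.le_fib_add_one j; omega
  have hfg : Nat.findGreatest (fun j => Nat.fib j < n) n = j := by
    rw [Nat.findGreatest_eq_iff]
    refine ⟨hjn, fun _ => h1, fun k hk hkn => ?_⟩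
    simp only [not_lt]
    calc n ≤ Nat.fib (j+1) := h2
    _ ≤ Nat.fib k := Nat.fib_mono hk
  rw [a]
  simp only [hfg]
  rw [dif_neg (by omega)]

/-- every n ≥ 2 lies in some interval -/
lemma exists_interval {n : ℕ} (hn : 2 ≤ n) :
    ∃ j, 2 ≤ j ∧ Nat.fib j < n ∧ n ≤ Nat.fib (j+1) := by
  set j := Nat.findGreatest (fun j => Nat.fib j < n) n with hj
  have hj2 : 2 ≤ j :=
    Nat.le_findGreatest hn (by show Nat.fib 2 < n; simp [Nat.fib_two]; omega)
  have hlt : Nat.fib j < n :=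
    Nat.findGreatest_spec (P := fun j => Nat.fib j < n) hn
      (by show Nat.fib 2 < n; simp [Nat.fib_two]; omega)
  refine ⟨j, hj2, hlt, ?_⟩
  by_cases hc : j + 1 ≤ n
  · have := Nat.findGreatest_is_greatest (P := fun j => Nat.fib j < n) (lt_add_one j) hc
    simpa using this
  · have hjn : j = n := le_antisymm (Nat.findGreatest_le n) (by omega)
    have := Nat.le_fib_add_one (j+1)
    omega

lemma a_bounds : ∀ n : ℕ, ∀ j : ℕ, 2 ≤ j → Nat.fib j < n → n ≤ Nat.fib (j+1) →
    Nat.fib j ≤ a n ∧ a n ≤ Nat.fib (j+1) - 1 := by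
  intro n
  induction n using Nat.strong_induction_on with
  | _ n ih =>
    intro j hj h1 h2
    rw [a_rec hj h1 h2]
    set m := n - Nat.fib j with hm
    have hfj : 0 < Nat.fib j := Nat.fib_pos.mpr (by omega)
    have hfib : Nat.fib (j+1) = Nat.fib j + Nat.fib (j-1) := by
      have : j - 1 + 2 = j + 1 := by omega
      rw [← this, Nat.fib_add_two]
      have : j - 1 + 1 = j := by omega
      rw [this]; ring
    have hm1 : 1 ≤ m := by omega
    have hmub : m ≤ Nat.fib (j-1) := by omega
    have key : 1 ≤ a m ∧ a m ≤ Nat.fib (j-1) := by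
      rcases eq_or_lt_of_le hm1 with h | h
      · rw [← h, a_one]
        exact ⟨le_rfl, Nat.fib_pos.mpr (by omega)⟩
      · obtain ⟨j', hj'2, hj'1, hj'2'⟩ := exists_interval (n := m) (by omega)
        have hmn : m < n := by omega
        obtain ⟨hl, hu⟩ := ih m hmn j' hj'2 hj'1 hj'2'
        have hj'lt : j' < j - 1 := by
          by_contra hc
          have : Nat.fib (j-1) ≤ Nat.fib j' := Nat.fib_mono (by omega)
          omega
        have : Nat.fib (j'+1) ≤ Nat.fib (j-1) := Nat.fib_mono (by omega)
        have hfj' : 1 ≤ Nat.fib j' := Nat.fib_pos.mpr (by omega)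
        omega
    omega

lemma a_le_fib : ∀ m k : ℕ, m ≤ Nat.fib k → a m ≤ Nat.fib k := by
  intro m k h
  by_cases hm : m ≤ 1
  · interval_cases m
    · rw [a_zero]; omega
    · rw [a_one]; omega
  · obtain ⟨j, hj2, h1, h2⟩ := exists_interval (n := m) (by omega)
    obtain ⟨_, hu⟩ := a_bounds m j hj2 h1 h2
    have hjk : j < k := by
      by_contra hc
      have : Nat.fib k ≤ Nat.fib j := Nat.fib_mono (by omega)
      omega
    have : Nat.fib (j+1) ≤ Nat.fib k := Nat.fib_mono (by omega)
    omega

/-- If a natural number occurs twice as a value of `a`, the two occurrences are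
at consecutive indices. -/
theorem a105774_twice_consecutive :
    ∀ x y : ℕ, x < y → a x = a y → y = x + 1 := by
  intro x y
  induction y using Nat.strong_induction_on generalizing x with
  | _ y ih =>
    intro hxy heq
    by_cases hy : y ≤ 1
    · interval_cases y
      · omega
      · interval_cases x
        rw [a_zero, a_one] at heq
    · obtain ⟨j, hj2, h1, h2⟩ := exists_interval (n := y) (by omega)
      obtain ⟨hyl, hyu⟩ := a_bounds y j hj2 h1 h2
      by_cases hx : x ≤ 1
      · have hfj1 : 1 ≤ Nat.fib j := Nat.fib_pos.mpr (by omega)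
        interval_cases x
        · rw [a_zero] at heq; omega
        · rw [a_one] at heq
          -- a y = 1, fib j ≤ 1 so j = 2, y = 2
          have hj2' : j = 2 := by
            by_contra hc
            have h3 : Nat.fib 3 = 2 := by decide
            have := Nat.fib_mono (show 3 ≤ j by omega)
            omega
          subst hj2'
          simp [Nat.fib_two, show Nat.fib 3 = 2 from by decide] at h1 h2
          omega
      · obtain ⟨i, hi2, g1, g2⟩ := exists_interval (n := x) (by omega)
        obtain ⟨hxl, hxu⟩ := a_bounds x i hi2 g1 g2
        have hij : i = j := by
          rcases lt_trichotomy i j with h | h | h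
          · have : Nat.fib (i+1) ≤ Nat.fib j := Nat.fib_mono (by omega)
            have hf : 1 ≤ Nat.fib (i+1) := Nat.fib_pos.mpr (by omega)
            omega
          · exact h
          · have : Nat.fib (j+1) ≤ Nat.fib i := Nat.fib_mono (by omega)
            omega
        subst hij
        rw [a_rec hi2 g1 g2, a_rec hi2 h1 h2] at heq
        have hax : a (x - Nat.fib i) ≤ Nat.fib (i+1) :=
          a_le_fib _ _ (by omega)
        have hay : a (y - Nat.fib i) ≤ Nat.fib (i+1) :=
          a_le_fib _ _ (by omega)
        have heq' : a (x - Nat.fib i) = a (y - Nat.fib i) := by omega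
        have hfpos : 1 ≤ Nat.fib i := Nat.fib_pos.mpr (by omega)
        have := ih (y - Nat.fib i) (by omega) (x := x - Nat.fib i) (by omega) heq'
        omega
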